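/- Let μ and ν be two distinct positive real numbers each satisfying 2 cos μ = μ sin μ and 2 cos ν = ν sin ν. Then ∫_{−1}^{0} sin((1+x)μ) sin((1+x)ν) dx + ∫_{0}^{1} sin((1−x)μ) sin((1−x)ν) dx + sin(μ) sin(ν) = 0. -/

import Mathlib

open Real Set

lemma int_cos_mul (c : ℝ) (hc : c ≠ 0) :
    ∫ x in (0:ℝ)..1, Real.cos (x * c) = Real.sin c / c := by
  rw [intervalIntegral.integral_comp_mul_right Real.cos hc]
  simp [integral_cos, div_eq_inv_mul]

lemma int_sin_sin (μ ν : ℝ) (h1 : μ - ν ≠ 0) (h2 : μ + ν ≠ 0) :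
    ∫ x in (0:ℝ)..1, Real.sin (x * μ) * Real.sin (x * ν) =
      Real.sin (μ - ν) / (2 * (μ - ν)) - Real.sin (μ + ν) / (2 * (μ + ν)) := by
  have key : ∀ x : ℝ, Real.sin (x * μ) * Real.sin (x * ν)
      = (Real.cos (x * (μ - ν)) - Real.cos (x * (μ + ν))) / 2 := by
    intro x
    rw [mul_sub, mul_add, Real.cos_sub, Real.cos_add]
    ring
  simp_rw [key]
  have i1 : IntervalIntegrable (fun x : ℝ => Real.cos (x * (μ - ν))) MeasureTheory.volume 0 1 := by
    apply Continuous.intervalIntegrable; fun_prop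
  have i2 : IntervalIntegrable (fun x : ℝ => Real.cos (x * (μ + ν))) MeasureTheory.volume 0 1 := by
    apply Continuous.intervalIntegrable; fun_prop
  rw [intervalIntegral.integral_div, intervalIntegral.integral_sub i1 i2,
    int_cos_mul _ h1, int_cos_mul _ h2]
  field_simp

/-- Orthogonality in `H = L²(−1,0) × L²(0,1) × ℝ` of Dirichlet eigenvectors associated with
distinct roots of the characteristic equation `2 cos μ = μ sin μ`. -/
theorem dirichlet_eigenvectors_orthogonal (μ ν : ℝ) (hμ : 0 < μ) (hν : 0 < ν) (hne : μ ≠ ν)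
    (hcμ : 2 * Real.cos μ = μ * Real.sin μ) (hcν : 2 * Real.cos ν = ν * Real.sin ν) :
    (∫ x in (-1 : ℝ)..0, Real.sin ((1 + x) * μ) * Real.sin ((1 + x) * ν)) +
    (∫ x in (0 : ℝ)..1, Real.sin ((1 - x) * μ) * Real.sin ((1 - x) * ν)) +
    Real.sin μ * Real.sin ν = 0 := by
  have h1 : μ - ν ≠ 0 := sub_ne_zero.mpr hne
  have h2 : μ + ν ≠ 0 := by positivity
  have e1 : (∫ x in (-1 : ℝ)..0, Real.sin ((1 + x) * μ) * Real.sin ((1 + x) * ν))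
      = ∫ x in (0:ℝ)..1, Real.sin (x * μ) * Real.sin (x * ν) := by
    have := intervalIntegral.integral_comp_add_right
      (a := (-1:ℝ)) (b := 0) (fun x => Real.sin (x * μ) * Real.sin (x * ν)) 1
    simpa [add_comm] using this
  have e2 : (∫ x in (0 : ℝ)..1, Real.sin ((1 - x) * μ) * Real.sin ((1 - x) * ν))
      = ∫ x in (0:ℝ)..1, Real.sin (x * μ) * Real.sin (x * ν) := by
    have := intervalIntegral.integral_comp_sub_left
      (a := (0:ℝ)) (b := 1) (fun x => Real.sin (x * μ) * Real.sin (x * ν)) 1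
    simpa using this
  rw [e1, e2, int_sin_sin μ ν h1 h2]
  rw [Real.sin_sub, Real.sin_add]
  have hμ2 : μ * Real.cos μ = μ ^ 2 * Real.sin μ / 2 := by nlinarith [hcμ]
  have hν2 : ν * Real.cos ν = ν ^ 2 * Real.sin ν / 2 := by nlinarith [hcν]
  field_simp
  linear_combination (4 * Real.sin μ) * hν2 - (4 * Real.sin ν) * hμ2
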